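/- arXiv:2111.03622 — 2 statements merged into one kernel-verified Lean document; each statement's English description precedes it below -/
import Mathlib

section
/- Let λ be a partition of n with largest part λ_1, and set j = n − λ_1. Then the number d_λ of standard Young tableaux of shape λ satisfies d_λ ≤ C(n, j) · √(j!). -/
/-- `l` is the row-length function of a partition of `n` (0-indexed rows). -/
def IsPartition (l : ℕ → ℕ) (n : ℕ) : Prop :=
  Antitone l ∧ (∑ i ∈ Finset.range n, l i = n) ∧ ∀ i, n ≤ i → l i = 0

/-- The cells of the Young diagram with row lengths `l` (0-indexed). -/
def cellsOf (l : ℕ → ℕ) : Set (ℕ × ℕ) := {c | c.2 < l c.1}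

/-- `T` is a standard Young tableau of the shape with row lengths `l` and `n` boxes:
a bijective filling with `1, …, n` that is increasing along rows and columns
(normalized to `0` outside the diagram). -/
def IsSYT (l : ℕ → ℕ) (n : ℕ) (T : ℕ × ℕ → ℕ) : Prop :=
  (∀ c, c ∉ cellsOf l → T c = 0) ∧
  (∀ c ∈ cellsOf l, 1 ≤ T c ∧ T c ≤ n) ∧
  (∀ m, 1 ≤ m → m ≤ n → ∃! c, c ∈ cellsOf l ∧ T c = m) ∧
  (∀ c d, c ∈ cellsOf l → d ∈ cellsOf l → c.1 ≤ d.1 → c.2 ≤ d.2 → c ≠ d → T c < T d)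

/-- The number `d_λ` of standard Young tableaux of shape `l`. -/
noncomputable def sytNum (l : ℕ → ℕ) (n : ℕ) : ℕ :=
  Nat.card { T : ℕ × ℕ → ℕ // IsSYT l n T }

/-- The conjugate (transpose) partition. -/
noncomputable def conj (l : ℕ → ℕ) : ℕ → ℕ := fun j => Nat.card { i : ℕ // j < l i }

/-- The shape obtained from `l` by removing the last box of row `i`. -/
def removeBox (l : ℕ → ℕ) (i : ℕ) : ℕ → ℕ := Function.update l i (l i - 1)

/-- The hook length of the box `(a, b)` (0-indexed) of the shape `l`. -/
noncomputable def hookLen (l : ℕ → ℕ) (a b : ℕ) : ℕ := (l a - b) + (conj l b - a) - 1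


def addBox (l : ℕ → ℕ) (i : ℕ) : ℕ → ℕ := Function.update l i (l i + 1)

def Rem (l : ℕ → ℕ) (i : ℕ) : Prop := l (i+1) < l i

def Addb (l : ℕ → ℕ) (i : ℕ) : Prop := i = 0 ∨ l i < l (i-1)

def RemF (l : ℕ → ℕ) (n : ℕ) : Finset ℕ := (Finset.range n).filter (fun i => l (i+1) < l i)

def AddF (l : ℕ → ℕ) (n : ℕ) : Finset ℕ := (Finset.range n).filter (fun i => i = 0 ∨ l i < l (i-1))

namespace SytAux

lemma sum_ext {l : ℕ → ℕ} {n : ℕ} (hl : IsPartition l n) {N : ℕ} (hN : n ≤ N) :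
    ∑ i ∈ Finset.range N, l i = n := by
  rw [← Finset.sum_range_add_sum_Ico _ hN, hl.2.1]
  have : ∑ i ∈ Finset.Ico n N, l i = 0 :=
    Finset.sum_eq_zero fun i hi => hl.2.2 i (Finset.mem_Ico.mp hi).1
  omega

lemma le_of_mem {l : ℕ → ℕ} {n : ℕ} (hl : IsPartition l n) {i : ℕ} : l i ≤ n := by
  rcases Nat.lt_or_ge i n with h | h
  · calc l i ≤ ∑ j ∈ Finset.range n, l j := Finset.single_le_sum (fun _ _ => Nat.zero_le _) (Finset.mem_range.mpr h)
    _ = n := hl.2.1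
  · rw [hl.2.2 i h]; exact Nat.zero_le _

lemma pos_row_lt {l : ℕ → ℕ} {n : ℕ} (hl : IsPartition l n) {i : ℕ} (h : 0 < l i) : i < n := by
  by_contra hc
  rw [hl.2.2 i (Nat.le_of_not_lt hc)] at h
  exact Nat.lt_irrefl 0 h

/-- cells are within the n × n box -/
lemma cell_lt {l : ℕ → ℕ} {n : ℕ} (hl : IsPartition l n) {c : ℕ × ℕ}
    (hc : c ∈ cellsOf l) : c.1 < n ∧ c.2 < n := by
  have h1 : c.1 < n := pos_row_lt hl (Nat.lt_of_le_of_lt (Nat.zero_le _) hc)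
  exact ⟨h1, Nat.lt_of_lt_of_le hc (le_of_mem hl)⟩

instance finite_partitions (n : ℕ) : Finite {l : ℕ → ℕ // IsPartition l n} := by
  have : Function.Injective (fun l : {l : ℕ → ℕ // IsPartition l n} =>
      (fun i : Fin n => (⟨l.1 i, Nat.lt_succ_of_le (le_of_mem l.2)⟩ : Fin (n+1)))) := by
    intro a b hab
    ext i
    rcases Nat.lt_or_ge i n with h | h
    · have := congrFun hab ⟨i, h⟩
      simpa using this
    · rw [a.2.2.2 i h, b.2.2.2 i h]
  exact Finite.of_injective _ this

noncomputable instance (n : ℕ) : Fintype {l : ℕ → ℕ // IsPartition l n} := Fintype.ofFinite _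

lemma finite_syt {l : ℕ → ℕ} {n : ℕ} (hl : IsPartition l n) :
    Finite {T : ℕ × ℕ → ℕ // IsSYT l n T} := by
  have hbd : ∀ (T : {T : ℕ × ℕ → ℕ // IsSYT l n T}) c, T.1 c < n + 1 := by
    intro T c
    by_cases hc : c ∈ cellsOf l
    · exact Nat.lt_succ_of_le (T.2.2.1 c hc).2
    · rw [T.2.1 c hc]; exact Nat.succ_pos n
  have : Function.Injective (fun T : {T : ℕ × ℕ → ℕ // IsSYT l n T} =>
      (fun c : Fin n × Fin n => (⟨T.1 (c.1, c.2), hbd T _⟩ : Fin (n+1)))) := by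
    intro a b hab
    ext c
    by_cases hc : c ∈ cellsOf l
    · obtain ⟨h1, h2⟩ := cell_lt hl hc
      have := congrFun hab (⟨c.1, h1⟩, ⟨c.2, h2⟩)
      simpa [Fin.ext_iff] using this
    · rw [a.2.1 c hc, b.2.1 c hc]
  exact Finite.of_injective _ this

/-- the empty tableau -/
lemma syt_zero {l : ℕ → ℕ} (hl0 : ∀ i, l i = 0) : sytNum l 0 = 1 := by
  rw [sytNum, Nat.card_eq_one_iff_unique]
  constructor
  · constructor
    intro a b
    ext c
    have hc : c ∉ cellsOf l := by simp [cellsOf, hl0]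
    rw [a.2.1 c hc, b.2.1 c hc]
  · refine ⟨⟨fun _ => 0, ?_, ?_, ?_, ?_⟩⟩
    · intro _ _; rfl
    · intro c hc; simp [cellsOf, hl0] at hc
    · intro m h1 h2; omega
    · intro c d hc; simp [cellsOf, hl0] at hc

lemma partition_zero {l : ℕ → ℕ} (hl : IsPartition l 0) : l = fun _ => 0 :=
  funext fun i => hl.2.2 i (Nat.zero_le i)

end SytAux
namespace SytAux

lemma antitone_iff {l : ℕ → ℕ} : Antitone l ↔ ∀ i, l (i+1) ≤ l i := by
  constructor
  · intro h i; exact h (Nat.le_succ i)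
  · intro h; exact antitone_nat_of_succ_le h

lemma removeBox_apply {l : ℕ → ℕ} {i j : ℕ} :
    removeBox l i j = if j = i then l i - 1 else l j := by
  simp [removeBox, Function.update]

lemma addBox_apply {l : ℕ → ℕ} {i j : ℕ} :
    addBox l i j = if j = i then l i + 1 else l j := by
  simp [addBox, Function.update]

lemma addBox_removeBox {l : ℕ → ℕ} {i : ℕ} (h : 0 < l i) :
    addBox (removeBox l i) i = l := by
  funext j
  simp only [addBox_apply, removeBox_apply]
  by_cases hj : j = i <;> simp [hj] <;> omega

lemma removeBox_addBox (l : ℕ → ℕ) (i : ℕ) :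
    removeBox (addBox l i) i = l := by
  funext j
  simp only [addBox_apply, removeBox_apply]
  by_cases hj : j = i <;> simp [hj]

/-- the tail vanishing of removeBox -/
lemma removeBox_tail {l : ℕ → ℕ} {m : ℕ} (hl : IsPartition l (m+1)) {i : ℕ}
    (hi : Rem l i) : removeBox l i m = 0 := by
  obtain ⟨ha, hs, hz⟩ := hl
  unfold Rem at hi
  rw [removeBox_apply]
  by_cases him : i = m
  · subst him
    rw [if_pos rfl]
    -- show l i ≤ 1
    by_contra hc
    have h2 : 2 ≤ l i := by omega
    have : ∀ j ∈ Finset.range (i+1), 2 ≤ l j := by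
      intro j hj
      exact le_trans h2 (ha (Nat.le_of_lt_succ (Finset.mem_range.mp hj)))
    have hge : (i+1) * 2 ≤ ∑ j ∈ Finset.range (i+1), l j := by
      calc (i+1) * 2 = ∑ _j ∈ Finset.range (i+1), 2 := by
            rw [Finset.sum_const, Finset.card_range]; ring
      _ ≤ _ := Finset.sum_le_sum this
    rw [hs] at hge
    omega
  · rw [if_neg (fun h => him h.symm)]
    by_contra hc
    have hlm : 1 ≤ l m := by omega
    have hi_lt : i < m + 1 := pos_row_lt ⟨ha, hs, hz⟩ (by omega)
    have hilt : i < m := by omega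
    -- l i ≥ 2 since l i > l (i+1) ≥ l m ≥ 1
    have h1 : 1 ≤ l (i+1) := le_trans hlm (ha (by omega))
    have h2 : 2 ≤ l i := by omega
    have hge : ∑ j ∈ Finset.range (m+1), l j ≥ 2 + m := by
      rw [← Finset.add_sum_erase _ l (Finset.mem_range.mpr hi_lt)]
      have : ∀ j ∈ (Finset.range (m+1)).erase i, 1 ≤ l j := by
        intro j hj
        have hj' := Finset.mem_range.mp (Finset.mem_of_mem_erase hj)
        exact le_trans hlm (ha (by omega))
      have hcard : ((Finset.range (m+1)).erase i).card = m := by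
        rw [Finset.card_erase_of_mem (Finset.mem_range.mpr hi_lt), Finset.card_range]
        omega
      have := Finset.sum_le_sum this
      rw [Finset.sum_const, hcard] at this
      simp at this
      omega
    omega

lemma rem_lt {l : ℕ → ℕ} {n : ℕ} (hl : IsPartition l n) {i : ℕ} (hi : Rem l i) : i < n :=
  pos_row_lt hl (Nat.lt_of_le_of_lt (Nat.zero_le _) hi)

/-- removing a removable box from a partition of m+1 gives a partition of m -/
lemma removeBox_isPartition {l : ℕ → ℕ} {m : ℕ} (hl : IsPartition l (m+1)) {i : ℕ}
    (hi : Rem l i) : IsPartition (removeBox l i) m := by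
  have htail := removeBox_tail hl hi
  obtain ⟨ha, hs, hz⟩ := hl
  have hpos : 0 < l i := Nat.lt_of_le_of_lt (Nat.zero_le _) hi
  have hi_lt : i < m + 1 := pos_row_lt ⟨ha, hs, hz⟩ hpos
  refine ⟨?_, ?_, ?_⟩
  · rw [antitone_iff]
    intro j
    have h1 : l (j+1) ≤ l j := ha (Nat.le_succ j)
    unfold Rem at hi
    rw [removeBox_apply, removeBox_apply]
    by_cases h2 : j + 1 = i
    · subst h2
      rw [if_pos rfl, if_neg (by omega)]
      omega
    · by_cases h3 : j = i
      · subst h3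
        rw [if_neg h2, if_pos rfl]
        omega
      · rw [if_neg h2, if_neg h3]
        exact h1
  · have hfull : ∑ j ∈ Finset.range (m+1), removeBox l i j = m := by
      have h1 : ∑ j ∈ Finset.range (m+1), removeBox l i j
          = (l i - 1) + ∑ j ∈ (Finset.range (m+1)).erase i, l j := by
        have := Finset.sum_update_of_mem (Finset.mem_range.mpr hi_lt) l (l i - 1)
        rwa [Finset.sdiff_singleton_eq_erase] at this
      have h2 : l i + ∑ j ∈ (Finset.range (m+1)).erase i, l j = m + 1 := by
        rw [Finset.add_sum_erase _ l (Finset.mem_range.mpr hi_lt), hs]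
      omega
    rw [Finset.sum_range_succ, htail] at hfull
    omega
  · intro j hj
    rcases Nat.eq_or_lt_of_le hj with h | h
    · rw [← h]; exact htail
    · rw [removeBox_apply, if_neg (by omega), hz j (by omega)]

lemma add_lt {l : ℕ → ℕ} {m : ℕ} (hl : IsPartition l m) {i : ℕ} (hi : Addb l i) :
    i < m + 1 := by
  rcases hi with h | h
  · omega
  · by_contra hc
    have : l (i-1) = 0 := hl.2.2 _ (by omega)
    omega

/-- adding a box at an addable position of a partition of m gives a partition of m+1 -/
lemma addBox_isPartition {l : ℕ → ℕ} {m : ℕ} (hl : IsPartition l m) {i : ℕ}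
    (hi : Addb l i) : IsPartition (addBox l i) (m+1) := by
  obtain ⟨ha, hs, hz⟩ := hl
  have hi_lt : i < m + 1 := add_lt ⟨ha, hs, hz⟩ hi
  refine ⟨?_, ?_, ?_⟩
  · rw [antitone_iff]
    intro j
    have h1 : l (j+1) ≤ l j := ha (Nat.le_succ j)
    rw [addBox_apply, addBox_apply]
    by_cases h2 : j + 1 = i
    · subst h2
      rw [if_pos rfl, if_neg (by omega)]
      rcases hi with h | h
      · omega
      · have hj : j + 1 - 1 = j := by omega
        rw [hj] at h
        omega
    · by_cases h3 : j = i
      · subst h3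
        rw [if_neg h2, if_pos rfl]
        omega
      · rw [if_neg h2, if_neg h3]
        exact h1
  · have h1 : ∑ j ∈ Finset.range (m+1), addBox l i j
        = (l i + 1) + ∑ j ∈ (Finset.range (m+1)).erase i, l j := by
      have := Finset.sum_update_of_mem (Finset.mem_range.mpr hi_lt) l (l i + 1)
      rwa [Finset.sdiff_singleton_eq_erase] at this
    have h2 : l i + ∑ j ∈ (Finset.range (m+1)).erase i, l j = m := by
      rw [Finset.add_sum_erase _ l (Finset.mem_range.mpr hi_lt)]
      exact sum_ext ⟨ha, hs, hz⟩ (Nat.le_succ m)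
    omega
  · intro j hj
    rw [addBox_apply, if_neg (by omega), hz j (by omega)]

lemma rem_addBox {l : ℕ → ℕ} (hl : Antitone l) (i : ℕ) : Rem (addBox l i) i := by
  unfold Rem
  rw [addBox_apply, addBox_apply, if_pos rfl, if_neg (by omega)]
  have : l (i+1) ≤ l i := hl (Nat.le_succ i)
  omega

end SytAux
namespace SytAux

instance (l : ℕ → ℕ) (i : ℕ) : Decidable (Rem l i) :=
  inferInstanceAs (Decidable (l (i+1) < l i))

instance (l : ℕ → ℕ) (i : ℕ) : Decidable (Addb l i) :=
  inferInstanceAs (Decidable (i = 0 ∨ l i < l (i-1)))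

lemma mem_RemF {l : ℕ → ℕ} {n i : ℕ} : i ∈ RemF l n ↔ i < n ∧ Rem l i := by
  simp [RemF, Rem, Finset.mem_filter, Finset.mem_range]

lemma mem_AddF {l : ℕ → ℕ} {n i : ℕ} : i ∈ AddF l n ↔ i < n ∧ Addb l i := by
  simp [AddF, Addb, Finset.mem_filter, Finset.mem_range]

lemma RemF_congr {l : ℕ → ℕ} {m : ℕ} (hl : IsPartition l m) {N N' : ℕ}
    (h : m ≤ N) (h' : m ≤ N') : RemF l N = RemF l N' := by
  ext i
  rw [mem_RemF, mem_RemF]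
  constructor <;> rintro ⟨_, hr⟩ <;> exact ⟨Nat.lt_of_lt_of_le (rem_lt hl hr) (by omega), hr⟩

lemma AddF_congr {l : ℕ → ℕ} {m : ℕ} (hl : IsPartition l m) {N N' : ℕ}
    (h : m + 1 ≤ N) (h' : m + 1 ≤ N') : AddF l N = AddF l N' := by
  ext i
  rw [mem_AddF, mem_AddF]
  constructor <;> rintro ⟨_, hr⟩ <;> exact ⟨Nat.lt_of_lt_of_le (add_lt hl hr) (by omega), hr⟩

lemma card_AddF {l : ℕ → ℕ} {m : ℕ} (hl : IsPartition l m) :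
    (AddF l (m+1)).card = (RemF l (m+1)).card + 1 := by
  have himg : AddF l (m+1) = insert 0 ((RemF l (m+1)).image Nat.succ) := by
    ext i
    rw [mem_AddF, Finset.mem_insert, Finset.mem_image]
    constructor
    · rintro ⟨hlt, h0 | hlt'⟩
      · exact Or.inl h0
      · rcases Nat.eq_zero_or_pos i with h | h
        · exact Or.inl h
        · refine Or.inr ⟨i - 1, mem_RemF.mpr ⟨by omega, ?_⟩, by omega⟩
          unfold Rem
          have : i - 1 + 1 = i := by omega
          rw [this]
          exact hlt'
    · rintro (h0 | ⟨j, hj, hji⟩)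
      · exact ⟨by omega, Or.inl h0⟩
      · obtain ⟨hjlt, hr⟩ := mem_RemF.mp hj
        have hj0 : j < m := by
          have := rem_lt hl hr
          omega
        refine ⟨by omega, Or.inr ?_⟩
        have h1 : i - 1 = j := by omega
        have h2 : i = j + 1 := by omega
        rw [h1, h2]
        exact hr
  rw [himg, Finset.card_insert_of_notMem, Finset.card_image_of_injective _ Nat.succ_injective]
  simp only [Finset.mem_image]
  rintro ⟨j, _, hj⟩
  exact Nat.succ_ne_zero j hj

lemma addb_removeBox_self {l : ℕ → ℕ} (ha : Antitone l) {k : ℕ} (hk : Rem l k) :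
    Addb (removeBox l k) k := by
  rcases Nat.eq_zero_or_pos k with h | h
  · exact Or.inl h
  · right
    rw [removeBox_apply, removeBox_apply, if_pos rfl, if_neg (by omega)]
    have h1 : l k ≤ l (k-1) := ha (by omega)
    unfold Rem at hk
    omega

lemma commute_boxes {μ : ℕ → ℕ} {i k : ℕ} (hik : k ≠ i) :
    removeBox (addBox μ i) k = addBox (removeBox μ k) i := by
  funext j
  simp only [removeBox_apply, addBox_apply, if_neg hik, if_neg (Ne.symm hik)]
  by_cases h1 : j = k
  · rw [if_pos h1, if_pos h1, if_neg (by omega)]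
  · rw [if_neg h1, if_neg h1]

lemma swap_cond {μ : ℕ → ℕ} {i k : ℕ} (hik : i ≠ k) :
    (Addb μ i ∧ Rem (addBox μ i) k) ↔ (Rem μ k ∧ Addb (removeBox μ k) i) := by
  unfold Addb Rem
  by_cases ha : i = k + 1
  · subst ha
    simp only [removeBox_apply, addBox_apply, Nat.add_sub_cancel, eq_self_iff_true,
      if_true, if_neg (show ¬ k + 1 + 1 = k + 1 by omega),
      if_neg (show ¬ k = k + 1 by omega), if_neg (show ¬ k + 1 = k by omega)]
    omega
  · by_cases hb : k = i + 1
    · subst hb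
      simp only [removeBox_apply, addBox_apply]
      rw [if_neg (show ¬ i + 1 = i by omega), if_neg (show ¬ i + 1 + 1 = i by omega),
        if_neg (show ¬ i = i + 1 by omega), if_neg (show ¬ i - 1 = i + 1 by omega)]
      omega
    · have hc1 : ¬ k + 1 = i := by omega
      have hc2 : ¬ i - 1 = k := by omega
      have hc3 : ¬ k = i := fun h => hik h.symm
      simp only [removeBox_apply, addBox_apply, if_neg hc1, if_neg hc2, if_neg hc3,
        if_neg hik]
      omega

end SytAux
namespace SytAux

lemma cells_removeBox {l : ℕ → ℕ} {k : ℕ} (hk : 0 < l k) :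
    cellsOf (removeBox l k) = cellsOf l \ {(k, l k - 1)} := by
  ext c
  simp only [cellsOf, Set.mem_setOf_eq, Set.mem_diff, Set.mem_singleton_iff, removeBox_apply]
  by_cases h : c.1 = k
  · rw [if_pos h]
    constructor
    · intro hlt
      refine ⟨by rw [h]; omega, ?_⟩
      intro hc
      have h2 : c.2 = l k - 1 := congrArg Prod.snd hc
      omega
    · rintro ⟨hlt, hne⟩
      rw [h] at hlt
      have : ¬ (c.2 = l k - 1) := by
        intro h2
        exact hne (Prod.ext h h2)
      omega
  · rw [if_neg h]
    constructor
    · intro hlt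
      exact ⟨hlt, fun hc => h (by rw [hc])⟩
    · exact fun h' => h'.1

lemma corner_mem {l : ℕ → ℕ} {k : ℕ} (hk : 0 < l k) : ((k, l k - 1) : ℕ × ℕ) ∈ cellsOf l := by
  simp only [cellsOf, Set.mem_setOf_eq]
  omega

lemma corner_not_mem {l : ℕ → ℕ} {k : ℕ} (hk : 0 < l k) :
    ((k, l k - 1) : ℕ × ℕ) ∉ cellsOf (removeBox l k) := by
  rw [cells_removeBox hk]
  simp

/-- adding back the corner with label m+1 gives an SYT of the bigger shape -/
lemma syt_update_up {l : ℕ → ℕ} {m k : ℕ} (hl : IsPartition l (m+1)) (hk : Rem l k)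
    {T' : ℕ × ℕ → ℕ} (hT' : IsSYT (removeBox l k) m T') :
    IsSYT l (m+1) (Function.update T' (k, l k - 1) (m+1)) := by
  obtain ⟨hz', hb', hu', hi'⟩ := hT'
  have hkpos : 0 < l k := by unfold Rem at hk; omega
  set c0 : ℕ × ℕ := (k, l k - 1) with hc0def
  have hc0 : c0 ∈ cellsOf l := corner_mem hkpos
  have hc0' : c0 ∉ cellsOf (removeBox l k) := corner_not_mem hkpos
  have hcells : cellsOf (removeBox l k) = cellsOf l \ {c0} := cells_removeBox hkpos
  have hval : ∀ c, c ≠ c0 → Function.update T' c0 (m+1) c = T' c := by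
    intro c hc
    rw [Function.update_apply, if_neg hc]
  refine ⟨?_, ?_, ?_, ?_⟩
  · intro c hc
    have hne : c ≠ c0 := fun h => hc (h ▸ hc0)
    rw [hval c hne]
    apply hz'
    rw [hcells]
    exact fun h' => hc h'.1
  · intro c hc
    by_cases hne : c = c0
    · rw [hne, Function.update_self]
      omega
    · rw [hval c hne]
      have hcr : c ∈ cellsOf (removeBox l k) := by
        rw [hcells]; exact ⟨hc, hne⟩
      have := hb' c hcr
      omega
  · intro v hv1 hv2
    rcases Nat.lt_or_ge v (m+1) with hvm | hvm
    · -- v ≤ m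
      obtain ⟨c, ⟨hcc, hcv⟩, hcu⟩ := hu' v hv1 (by omega)
      have hcne : c ≠ c0 := fun h => hc0' (h ▸ hcc)
      refine ⟨c, ⟨(hcells ▸ hcc).1, by rw [hval c hcne]; exact hcv⟩, ?_⟩
      rintro d ⟨hdc, hdv⟩
      have hdne : d ≠ c0 := by
        intro h
        rw [h, Function.update_self] at hdv
        omega
      rw [hval d hdne] at hdv
      exact hcu d ⟨by rw [hcells]; exact ⟨hdc, hdne⟩, hdv⟩
    · -- v = m+1
      have hv : v = m + 1 := by omega
      refine ⟨c0, ⟨hc0, by rw [Function.update_self, hv]⟩, ?_⟩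
      rintro d ⟨hdc, hdv⟩
      by_contra hdne
      rw [hval d hdne] at hdv
      by_cases hdr : d ∈ cellsOf (removeBox l k)
      · have := hb' d hdr
        omega
      · rw [hz' d hdr] at hdv
        omega
  · intro c d hc hd h1 h2 hne
    by_cases hdc0 : d = c0
    · subst hdc0
      rw [Function.update_self]
      have hcne : c ≠ c0 := fun h => hne (h.trans rfl)
      rw [hval c hcne]
      by_cases hcr : c ∈ cellsOf (removeBox l k)
      · have := hb' c hcr
        omega
      · have : c ∈ cellsOf l \ {c0} := ⟨hc, hcne⟩
        rw [← hcells] at this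
        exact absurd this hcr
    · by_cases hcc0 : c = c0
      · -- impossible : no cell strictly beyond the corner
        exfalso
        subst hcc0
        have hd2 : d.2 < l d.1 := hd
        have h1' : k ≤ d.1 := h1
        have h2' : l k - 1 ≤ d.2 := h2
        rcases Nat.eq_or_lt_of_le h1' with heq | hlt
        · apply hne
          refine Prod.ext heq ?_
          show l k - 1 = d.2
          have hr : l d.1 = l k := by rw [← heq]
          omega
        · have hmono : l d.1 ≤ l (k+1) := hl.1 hlt
          unfold Rem at hk
          omega
      · have hcr : c ∈ cellsOf (removeBox l k) := by rw [hcells]; exact ⟨hc, hcc0⟩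
        have hdr : d ∈ cellsOf (removeBox l k) := by rw [hcells]; exact ⟨hd, hdc0⟩
        rw [hval c hcc0, hval d hdc0]
        exact hi' c d hcr hdr h1 h2 hne

/-- the maximal entry of an SYT sits at a removable corner -/
lemma max_corner {l : ℕ → ℕ} {m : ℕ} (hl : IsPartition l (m+1)) {T : ℕ × ℕ → ℕ}
    (hT : IsSYT l (m+1) T) {c : ℕ × ℕ} (hc : c ∈ cellsOf l) (hTc : T c = m+1) :
    c.2 = l c.1 - 1 ∧ Rem l c.1 := by
  obtain ⟨hz, hb, hu, hi⟩ := hT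
  constructor
  · by_contra hend
    have hlt : c.2 + 1 < l c.1 := by
      have : c.2 < l c.1 := hc
      omega
    have hd : ((c.1, c.2 + 1) : ℕ × ℕ) ∈ cellsOf l := hlt
    have := hi c (c.1, c.2+1) hc hd (le_refl _) (by omega)
      (by intro h; rw [Prod.ext_iff] at h; omega)
    have := hb (c.1, c.2+1) hd
    omega
  · unfold Rem
    by_contra hrem
    have hle : l c.1 ≤ l (c.1 + 1) := by omega
    have hd : ((c.1 + 1, c.2) : ℕ × ℕ) ∈ cellsOf l := by
      have : c.2 < l c.1 := hc
      show c.2 < l (c.1 + 1)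
      omega
    have := hi c (c.1+1, c.2) hc hd (by omega) (le_refl _)
      (by intro h; rw [Prod.ext_iff] at h; omega)
    have := hb (c.1+1, c.2) hd
    omega

/-- removing the maximal entry gives an SYT of the smaller shape -/
lemma syt_update_down {l : ℕ → ℕ} {m : ℕ} (hl : IsPartition l (m+1)) {T : ℕ × ℕ → ℕ}
    (hT : IsSYT l (m+1) T) {c : ℕ × ℕ} (hc : c ∈ cellsOf l) (hTc : T c = m+1)
    (huniq : ∀ d, d ∈ cellsOf l ∧ T d = m+1 → d = c) :
    IsSYT (removeBox l c.1) m (Function.update T c 0) := by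
  obtain ⟨hz, hb, hu, hi⟩ := hT
  obtain ⟨hcol, hrem⟩ := max_corner hl ⟨hz, hb, hu, hi⟩ hc hTc
  have hkpos : 0 < l c.1 := by unfold Rem at hrem; omega
  have hcc : c = (c.1, l c.1 - 1) := Prod.ext rfl hcol
  have hcells : cellsOf (removeBox l c.1) = cellsOf l \ {c} := by
    rw [cells_removeBox hkpos, ← hcc]
  have hval : ∀ d, d ≠ c → Function.update T c 0 d = T d := by
    intro d hd
    rw [Function.update_apply, if_neg hd]
  refine ⟨?_, ?_, ?_, ?_⟩
  · intro d hd
    by_cases hdc : d = c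
    · rw [hdc, Function.update_self]
    · rw [hval d hdc]
      apply hz
      intro hmem
      exact hd (by rw [hcells]; exact ⟨hmem, hdc⟩)
  · intro d hd
    rw [hcells] at hd
    rw [hval d hd.2]
    have h1 := hb d hd.1
    have h2 : T d ≠ m + 1 := fun h => hd.2 (huniq d ⟨hd.1, h⟩)
    omega
  · intro v hv1 hv2
    obtain ⟨d, ⟨hdc, hdv⟩, hdu⟩ := hu v hv1 (by omega)
    have hdne : d ≠ c := by
      intro h
      rw [h, hTc] at hdv
      omega
    refine ⟨d, ⟨by rw [hcells]; exact ⟨hdc, hdne⟩, by rw [hval d hdne]; exact hdv⟩, ?_⟩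
    rintro e ⟨hec, hev⟩
    rw [hcells] at hec
    rw [hval e hec.2] at hev
    exact hdu e ⟨hec.1, hev⟩
  · intro d e hd he h1 h2 hne
    rw [hcells] at hd he
    rw [hval d hd.2, hval e he.2]
    exact hi d e hd.1 he.1 h1 h2 hne

end SytAux
namespace SytAux

theorem rec_formula {l : ℕ → ℕ} {m : ℕ} (hl : IsPartition l (m+1)) :
    sytNum l (m+1) = ∑ k ∈ RemF l (m+1), sytNum (removeBox l k) m := by
  classical
  haveI hfib : ∀ k : {x // x ∈ RemF l (m+1)}, Finite {T' : ℕ × ℕ → ℕ // IsSYT (removeBox l k.1) m T'} := by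
    intro k
    exact finite_syt (removeBox_isPartition hl (mem_RemF.mp k.2).2)
  haveI : ∀ k : {x // x ∈ RemF l (m+1)}, Fintype {T' : ℕ × ℕ → ℕ // IsSYT (removeBox l k.1) m T'} :=
    fun k => Fintype.ofFinite _
  haveI : Fintype {T : ℕ × ℕ → ℕ // IsSYT l (m+1) T} := @Fintype.ofFinite _ (finite_syt hl)
  -- the reconstruction map
  set F : (Σ k : {x // x ∈ RemF l (m+1)}, {T' : ℕ × ℕ → ℕ // IsSYT (removeBox l k.1) m T'}) →
      {T : ℕ × ℕ → ℕ // IsSYT l (m+1) T} :=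
    fun p => ⟨Function.update p.2.1 (p.1.1, l p.1.1 - 1) (m+1),
      syt_update_up hl (mem_RemF.mp p.1.2).2 p.2.2⟩ with hF
  have hbij : Function.Bijective F := by
    constructor
    · rintro ⟨⟨k, hk⟩, ⟨T', hT'⟩⟩ ⟨⟨k', hk'⟩, ⟨T'', hT''⟩⟩ heq
      have heqf : Function.update T' (k, l k - 1) (m+1)
          = Function.update T'' (k', l k' - 1) (m+1) := congrArg Subtype.val heq
      have hremk : Rem l k := (mem_RemF.mp hk).2
      have hremk' : Rem l k' := (mem_RemF.mp hk').2
      have hkpos : 0 < l k := by unfold Rem at hremk; omega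
      have hkpos' : 0 < l k' := by unfold Rem at hremk'; omega
      have hcorner : (k, l k - 1) = (k', l k' - 1) := by
        by_contra hne
        have h1 : Function.update T' (k, l k - 1) (m+1) (k, l k - 1) = m + 1 :=
          Function.update_self _ _ _
        rw [heqf] at h1
        rw [Function.update_apply, if_neg hne] at h1
        by_cases hmem : ((k, l k - 1) : ℕ × ℕ) ∈ cellsOf (removeBox l k')
        · have := hT''.2.1 _ hmem
          omega
        · have := hT''.1 _ hmem
          omega
      have hkk : k = k' := congrArg Prod.fst hcorner
      subst hkk
      have hTT : T' = T'' := by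
        funext x
        by_cases hx : x = (k, l k - 1)
        · rw [hx, hT'.1 _ (corner_not_mem hkpos), hT''.1 _ (corner_not_mem hkpos)]
        · have := congrFun heqf x
          rwa [Function.update_apply, if_neg hx, Function.update_apply, if_neg hx] at this
      subst hTT
      rfl
    · rintro ⟨T, hT⟩
      obtain ⟨c, ⟨hcc, hcv⟩, hcu⟩ := hT.2.2.1 (m+1) (by omega) (le_refl _)
      obtain ⟨hcol, hrem⟩ := max_corner hl hT hcc hcv
      have hkpos : 0 < l c.1 := by unfold Rem at hrem; omega
      have hmem : c.1 ∈ RemF l (m+1) := mem_RemF.mpr ⟨rem_lt hl hrem, hrem⟩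
      have hcc' : c = (c.1, l c.1 - 1) := Prod.ext rfl hcol
      refine ⟨⟨⟨c.1, hmem⟩, ⟨Function.update T c 0,
        syt_update_down hl hT hcc hcv (fun d hd => hcu d hd)⟩⟩, ?_⟩
      apply Subtype.ext
      show Function.update (Function.update T c 0) (c.1, l c.1 - 1) (m+1) = T
      rw [← hcc', Function.update_idem, ← hcv, Function.update_eq_self]
  have hcard : Nat.card {T : ℕ × ℕ → ℕ // IsSYT l (m+1) T}
      = Nat.card (Σ k : {x // x ∈ RemF l (m+1)}, {T' : ℕ × ℕ → ℕ // IsSYT (removeBox l k.1) m T'}) :=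
    (Nat.card_congr (Equiv.ofBijective F hbij)).symm
  rw [sytNum, hcard, Nat.card_eq_fintype_card, Fintype.card_sigma]
  have : ∀ k : {x // x ∈ RemF l (m+1)},
      Fintype.card {T' : ℕ × ℕ → ℕ // IsSYT (removeBox l k.1) m T'}
        = sytNum (removeBox l k.1) m := by
    intro k
    rw [sytNum, Nat.card_eq_fintype_card]
  rw [Finset.sum_congr rfl (fun k _ => this k)]
  exact Finset.sum_coe_sort (RemF l (m+1)) (fun k => sytNum (removeBox l k) m)

end SytAux
namespace SytAux

lemma AddF_filter (μ : ℕ → ℕ) (n : ℕ) :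
    AddF μ n = (Finset.range n).filter (fun i => Addb μ i) := rfl

lemma RemF_filter (μ : ℕ → ℕ) (n : ℕ) :
    RemF μ n = (Finset.range n).filter (fun i => Rem μ i) := rfl

lemma erase_RemF (l : ℕ → ℕ) (n i : ℕ) :
    (RemF l n).erase i = (Finset.range n).filter (fun k => k ≠ i ∧ Rem l k) := by
  ext k
  simp only [Finset.mem_erase, mem_RemF, Finset.mem_filter, Finset.mem_range]
  tauto

lemma erase_AddF (l : ℕ → ℕ) (n i : ℕ) :
    (AddF l n).erase i = (Finset.range n).filter (fun k => k ≠ i ∧ Addb l k) := by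
  ext k
  simp only [Finset.mem_erase, mem_AddF, Finset.mem_filter, Finset.mem_range]
  tauto

theorem u_lemma : ∀ (m : ℕ) (μ : ℕ → ℕ), IsPartition μ m →
    ∑ i ∈ AddF μ (m+1), sytNum (addBox μ i) (m+1) = (m+1) * sytNum μ m := by
  intro m
  induction m with
  | zero =>
    intro μ hμ
    have hμ0 : μ = fun _ => 0 := partition_zero hμ
    subst hμ0
    have hA : AddF (fun _ => 0) 1 = {0} := by
      ext i
      rw [mem_AddF, Finset.mem_singleton]
      constructor
      · rintro ⟨h, _⟩; omega
      · rintro rfl; exact ⟨one_pos, Or.inl rfl⟩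
    rw [hA, Finset.sum_singleton]
    have hadd : IsPartition (addBox (fun _ => 0) 0) 1 := addBox_isPartition hμ (Or.inl rfl)
    rw [rec_formula hadd]
    have hR : RemF (addBox (fun _ => 0) 0) 1 = {0} := by
      ext i
      rw [mem_RemF, Finset.mem_singleton]
      constructor
      · rintro ⟨h, _⟩; omega
      · rintro rfl
        refine ⟨one_pos, ?_⟩
        unfold Rem
        simp [addBox_apply]
    rw [hR, Finset.sum_singleton, removeBox_addBox, syt_zero (fun _ => rfl)]
  | succ m IH =>
    intro μ hμ
    set s0 := sytNum μ (m+1) with hs0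
    -- step 1 : expand by the recursion and pull out the diagonal term
    have hstep1 : ∀ i ∈ AddF μ (m+2), sytNum (addBox μ i) (m+2)
        = s0 + ∑ k ∈ (RemF (addBox μ i) (m+2)).erase i,
            sytNum (removeBox (addBox μ i) k) (m+1) := by
      intro i hi
      obtain ⟨hilt, hiadd⟩ := mem_AddF.mp hi
      have hpart : IsPartition (addBox μ i) (m+1+1) := addBox_isPartition hμ hiadd
      rw [rec_formula hpart]
      have hmem : i ∈ RemF (addBox μ i) (m+2) := mem_RemF.mpr ⟨hilt, rem_addBox hμ.1 i⟩
      rw [← Finset.add_sum_erase _ _ hmem, removeBox_addBox]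
    have hLHS : ∑ i ∈ AddF μ (m+2), sytNum (addBox μ i) (m+2)
        = (AddF μ (m+2)).card * s0 +
          ∑ i ∈ AddF μ (m+2), ∑ k ∈ (RemF (addBox μ i) (m+2)).erase i,
            sytNum (removeBox (addBox μ i) k) (m+1) := by
      rw [Finset.sum_congr rfl hstep1, Finset.sum_add_distrib, Finset.sum_const, smul_eq_mul]
    -- the off-diagonal double sum, in symmetric form
    have hD : ∑ i ∈ AddF μ (m+2), ∑ k ∈ (RemF (addBox μ i) (m+2)).erase i,
            sytNum (removeBox (addBox μ i) k) (m+1)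
        = ∑ i ∈ Finset.range (m+2), ∑ k ∈ Finset.range (m+2),
            (if i ≠ k ∧ Addb μ i ∧ Rem (addBox μ i) k
              then sytNum (removeBox (addBox μ i) k) (m+1) else 0) := by
      rw [AddF_filter, Finset.sum_filter]
      apply Finset.sum_congr rfl
      intro i _
      by_cases hA : Addb μ i
      · rw [if_pos hA, erase_RemF, Finset.sum_filter]
        apply Finset.sum_congr rfl
        intro k _
        by_cases h1 : k = i
        · rw [if_neg (by tauto), if_neg (by tauto)]
        · by_cases h2 : Rem (addBox μ i) k
          · rw [if_pos ⟨h1, h2⟩, if_pos ⟨fun h => h1 h.symm, hA, h2⟩]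
          · rw [if_neg (by tauto), if_neg (by tauto)]
      · rw [if_neg hA]
        symm
        apply Finset.sum_eq_zero
        intro k _
        rw [if_neg (by tauto)]
    have hswap : ∀ i k : ℕ,
        (if i ≠ k ∧ Addb μ i ∧ Rem (addBox μ i) k
          then sytNum (removeBox (addBox μ i) k) (m+1) else 0)
        = (if i ≠ k ∧ Rem μ k ∧ Addb (removeBox μ k) i
          then sytNum (addBox (removeBox μ k) i) (m+1) else 0) := by
      intro i k
      by_cases h1 : i = k
      · rw [if_neg (by tauto), if_neg (by tauto)]
      · by_cases h2 : Addb μ i ∧ Rem (addBox μ i) k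
        · have h3 := (swap_cond h1).mp h2
          rw [if_pos ⟨h1, h2⟩, if_pos ⟨h1, h3⟩, commute_boxes (fun h => h1 h.symm)]
        · have h3 : ¬ (Rem μ k ∧ Addb (removeBox μ k) i) := fun h => h2 ((swap_cond h1).mpr h)
          rw [if_neg (by tauto), if_neg (by tauto)]
    have hD2 : ∑ i ∈ Finset.range (m+2), ∑ k ∈ Finset.range (m+2),
            (if i ≠ k ∧ Addb μ i ∧ Rem (addBox μ i) k
              then sytNum (removeBox (addBox μ i) k) (m+1) else 0)
        = ∑ k ∈ Finset.range (m+2), ∑ i ∈ Finset.range (m+2),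
            (if i ≠ k ∧ Rem μ k ∧ Addb (removeBox μ k) i
              then sytNum (addBox (removeBox μ k) i) (m+1) else 0) := by
      rw [Finset.sum_comm]
      exact Finset.sum_congr rfl (fun k _ => Finset.sum_congr rfl (fun i _ => hswap i k))
    have hD3 : ∑ k ∈ Finset.range (m+2), ∑ i ∈ Finset.range (m+2),
            (if i ≠ k ∧ Rem μ k ∧ Addb (removeBox μ k) i
              then sytNum (addBox (removeBox μ k) i) (m+1) else 0)
        = ∑ k ∈ RemF μ (m+2), ∑ i ∈ (AddF (removeBox μ k) (m+2)).erase k,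
            sytNum (addBox (removeBox μ k) i) (m+1) := by
      rw [RemF_filter, Finset.sum_filter]
      apply Finset.sum_congr rfl
      intro k _
      by_cases hR : Rem μ k
      · rw [if_pos hR, erase_AddF, Finset.sum_filter]
        apply Finset.sum_congr rfl
        intro i _
        by_cases h1 : i = k
        · rw [if_neg (by tauto), if_neg (by tauto)]
        · by_cases h2 : Addb (removeBox μ k) i
          · rw [if_pos ⟨h1, hR, h2⟩, if_pos ⟨h1, h2⟩]
          · rw [if_neg (by tauto), if_neg (by tauto)]
      · rw [if_neg hR]
        apply Finset.sum_eq_zero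
        intro i _
        rw [if_neg (by tauto)]
    -- the inner sums on the other side
    have hinner : ∀ k ∈ RemF μ (m+2),
        s0 + ∑ i ∈ (AddF (removeBox μ k) (m+2)).erase k,
            sytNum (addBox (removeBox μ k) i) (m+1)
        = (m+1) * sytNum (removeBox μ k) m := by
      intro k hk
      obtain ⟨hklt, hkrem⟩ := mem_RemF.mp hk
      have hrp : IsPartition (removeBox μ k) m := removeBox_isPartition hμ hkrem
      have hkadd : k ∈ AddF (removeBox μ k) (m+2) :=
        mem_AddF.mpr ⟨hklt, addb_removeBox_self hμ.1 hkrem⟩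
      have hback : addBox (removeBox μ k) k = μ :=
        addBox_removeBox (show 0 < μ k by unfold Rem at hkrem; omega)
      calc s0 + ∑ i ∈ (AddF (removeBox μ k) (m+2)).erase k,
              sytNum (addBox (removeBox μ k) i) (m+1)
          = ∑ i ∈ AddF (removeBox μ k) (m+2), sytNum (addBox (removeBox μ k) i) (m+1) := by
            rw [← Finset.add_sum_erase _ _ hkadd, hback]
        _ = ∑ i ∈ AddF (removeBox μ k) (m+1), sytNum (addBox (removeBox μ k) i) (m+1) := by
            rw [AddF_congr hrp (N := m+2) (N' := m+1) (by omega) (by omega)]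
        _ = (m+1) * sytNum (removeBox μ k) m := IH (removeBox μ k) hrp
    have hE : ∑ k ∈ RemF μ (m+2), sytNum (removeBox μ k) m = s0 := by
      rw [RemF_congr hμ (N := m+2) (N' := m+1) (by omega) (by omega), hs0, rec_formula hμ]
    have hfin : (∑ k ∈ RemF μ (m+2), ∑ i ∈ (AddF (removeBox μ k) (m+2)).erase k,
            sytNum (addBox (removeBox μ k) i) (m+1)) + (RemF μ (m+2)).card * s0
        = (m+1) * s0 := by
      have h1 : ∑ k ∈ RemF μ (m+2), (s0 + ∑ i ∈ (AddF (removeBox μ k) (m+2)).erase k,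
            sytNum (addBox (removeBox μ k) i) (m+1))
          = ∑ k ∈ RemF μ (m+2), (m+1) * sytNum (removeBox μ k) m :=
        Finset.sum_congr rfl hinner
      rw [Finset.sum_add_distrib, Finset.sum_const, smul_eq_mul, ← Finset.mul_sum, hE] at h1
      omega
    have hcard : (AddF μ (m+2)).card = (RemF μ (m+2)).card + 1 := card_AddF hμ
    rw [hLHS, hD, hD2, hD3, hcard]
    set D := ∑ k ∈ RemF μ (m+2), ∑ i ∈ (AddF (removeBox μ k) (m+2)).erase k,
        sytNum (addBox (removeBox μ k) i) (m+1)
    set R := (RemF μ (m+2)).card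
    calc (R + 1) * s0 + D = (D + R * s0) + s0 := by ring
      _ = (m+1) * s0 + s0 := by rw [hfin]
      _ = (m+1+1) * s0 := by ring

end SytAux
namespace SytAux

noncomputable instance instUniqueP0 : Unique {l : ℕ → ℕ // IsPartition l 0} where
  default := ⟨fun _ => 0, ⟨antitone_const, by simp, fun _ _ => rfl⟩⟩
  uniq a := Subtype.ext (partition_zero a.2)

theorem sum_squares : ∀ n : ℕ,
    ∑ lam : {l : ℕ → ℕ // IsPartition l n}, (sytNum lam.1 n)^2 = n.factorial := by
  intro n
  induction n with
  | zero =>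
    rw [Finset.univ_unique, Finset.sum_singleton]
    have h : sytNum ((default : {l : ℕ → ℕ // IsPartition l 0}) : ℕ → ℕ) 0 = 1 :=
      syt_zero (fun _ => rfl)
    rw [h]
    norm_num [Nat.factorial]
  | succ m IH =>
    have step1 : ∑ lam : {l : ℕ → ℕ // IsPartition l (m+1)}, (sytNum lam.1 (m+1))^2
        = ∑ lam : {l : ℕ → ℕ // IsPartition l (m+1)},
            ∑ k ∈ RemF lam.1 (m+1), sytNum lam.1 (m+1) * sytNum (removeBox lam.1 k) m := by
      apply Finset.sum_congr rfl
      intro lam _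
      rw [pow_two, ← Finset.mul_sum]
      congr 1
      exact rec_formula lam.2
    have step2 : ∑ lam : {l : ℕ → ℕ // IsPartition l (m+1)},
            ∑ k ∈ RemF lam.1 (m+1), sytNum lam.1 (m+1) * sytNum (removeBox lam.1 k) m
        = ∑ mu : {l : ℕ → ℕ // IsPartition l m},
            ∑ i ∈ AddF mu.1 (m+1), sytNum (addBox mu.1 i) (m+1) * sytNum mu.1 m := by
      rw [Finset.sum_sigma', Finset.sum_sigma']
      refine Finset.sum_bij'
        (fun p hp => ⟨⟨removeBox p.1.1 p.2,
          removeBox_isPartition p.1.2 (mem_RemF.mp (Finset.mem_sigma.mp hp).2).2⟩, p.2⟩)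
        (fun q hq => ⟨⟨addBox q.1.1 q.2,
          addBox_isPartition q.1.2 (mem_AddF.mp (Finset.mem_sigma.mp hq).2).2⟩, q.2⟩)
        ?_ ?_ ?_ ?_ ?_
      · intro p hp
        have hk := (Finset.mem_sigma.mp hp).2
        obtain ⟨hlt, hrem⟩ := mem_RemF.mp hk
        exact Finset.mem_sigma.mpr ⟨Finset.mem_univ _,
          mem_AddF.mpr ⟨hlt, addb_removeBox_self p.1.2.1 hrem⟩⟩
      · intro q hq
        have hk := (Finset.mem_sigma.mp hq).2
        obtain ⟨hlt, hadd⟩ := mem_AddF.mp hk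
        exact Finset.mem_sigma.mpr ⟨Finset.mem_univ _,
          mem_RemF.mpr ⟨hlt, rem_addBox q.1.2.1 q.2⟩⟩
      · rintro ⟨⟨l, hl⟩, k⟩ hp
        have hrem := (mem_RemF.mp (Finset.mem_sigma.mp hp).2).2
        have hpos : 0 < l k := Nat.lt_of_le_of_lt (Nat.zero_le _) hrem
        refine Sigma.ext ?_ (HEq.refl _)
        exact Subtype.ext (addBox_removeBox hpos)
      · rintro ⟨⟨l, hl⟩, k⟩ hq
        refine Sigma.ext ?_ (HEq.refl _)
        exact Subtype.ext (removeBox_addBox l k)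
      · rintro ⟨⟨l, hl⟩, k⟩ hp
        have hrem := (mem_RemF.mp (Finset.mem_sigma.mp hp).2).2
        have hpos : 0 < l k := Nat.lt_of_le_of_lt (Nat.zero_le _) hrem
        show sytNum l (m+1) * sytNum (removeBox l k) m
          = sytNum (addBox (removeBox l k) k) (m+1) * sytNum (removeBox l k) m
        rw [addBox_removeBox hpos]
    have step3 : ∑ mu : {l : ℕ → ℕ // IsPartition l m},
            ∑ i ∈ AddF mu.1 (m+1), sytNum (addBox mu.1 i) (m+1) * sytNum mu.1 m
        = (m+1) * ∑ mu : {l : ℕ → ℕ // IsPartition l m}, (sytNum mu.1 m)^2 := by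
      rw [Finset.mul_sum]
      apply Finset.sum_congr rfl
      intro mu _
      rw [← Finset.sum_mul, u_lemma m mu.1 mu.2, pow_two]
      ring
    rw [step1, step2, step3, IH, Nat.factorial_succ]

end SytAux
namespace SytAux

/-- the cells in rows 1, 2, ... -/
def lowCells (l : ℕ → ℕ) (n : ℕ) : Finset (ℕ × ℕ) :=
  (Finset.Ico 1 n).biUnion (fun a => (Finset.range (l a)).image (fun b => (a, b)))

lemma mem_lowCells {l : ℕ → ℕ} {n : ℕ} {c : ℕ × ℕ} :
    c ∈ lowCells l n ↔ 1 ≤ c.1 ∧ c.1 < n ∧ c.2 < l c.1 := by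
  constructor
  · intro h
    obtain ⟨a, ha, h2⟩ := Finset.mem_biUnion.mp h
    obtain ⟨b, hb, hba⟩ := Finset.mem_image.mp h2
    obtain ⟨h3, h4⟩ := Finset.mem_Ico.mp ha
    subst hba
    exact ⟨h3, h4, Finset.mem_range.mp hb⟩
  · rintro ⟨h1, h2, h3⟩
    exact Finset.mem_biUnion.mpr ⟨c.1, Finset.mem_Ico.mpr ⟨h1, h2⟩,
      Finset.mem_image.mpr ⟨c.2, Finset.mem_range.mpr h3, Prod.mk.eta⟩⟩

lemma lowCells_subset_cells {l : ℕ → ℕ} {n : ℕ} {c : ℕ × ℕ} (h : c ∈ lowCells l n) :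
    c ∈ cellsOf l := (mem_lowCells.mp h).2.2

lemma erase_range_zero {n : ℕ} : (Finset.range n).erase 0 = Finset.Ico 1 n := by
  ext i
  simp only [Finset.mem_erase, Finset.mem_range, Finset.mem_Ico]
  omega

lemma sum_Ico_one {l : ℕ → ℕ} {n : ℕ} (hl : IsPartition l n) :
    ∑ a ∈ Finset.Ico 1 n, l a = n - l 0 := by
  rcases Nat.eq_zero_or_pos n with h | h
  · subst h
    simp
  · have h0 : (0 : ℕ) ∈ Finset.range n := Finset.mem_range.mpr h
    have := Finset.add_sum_erase _ l h0
    rw [erase_range_zero, hl.2.1] at this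
    omega

lemma card_lowCells {l : ℕ → ℕ} {n : ℕ} (hl : IsPartition l n) :
    (lowCells l n).card = n - l 0 := by
  rw [lowCells, Finset.card_biUnion]
  · rw [← sum_Ico_one hl]
    apply Finset.sum_congr rfl
    intro a _
    rw [Finset.card_image_of_injective, Finset.card_range]
    intro x y h
    exact congrArg Prod.snd h
  · intro x _ y _ hxy
    rw [Function.onFun, Finset.disjoint_left]
    intro c hc hc'
    obtain ⟨_, _, h1⟩ := Finset.mem_image.mp hc
    obtain ⟨_, _, h2⟩ := Finset.mem_image.mp hc'
    exact hxy ((congrArg Prod.fst h1).trans (congrArg Prod.fst h2).symm)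

lemma syt_val_inj {l : ℕ → ℕ} {n : ℕ} {T : ℕ × ℕ → ℕ} (hT : IsSYT l n T) {c d : ℕ × ℕ}
    (hc : c ∈ cellsOf l) (hd : d ∈ cellsOf l) (h : T c = T d) : c = d := by
  obtain ⟨hb1, hb2⟩ := hT.2.1 c hc
  obtain ⟨e, _, hu⟩ := hT.2.2.1 (T c) hb1 hb2
  exact (hu c ⟨hc, rfl⟩).trans (hu d ⟨hd, h.symm⟩).symm

/-- rank of `v` in a finite set -/
def rankIn (S : Finset ℕ) (v : ℕ) : ℕ := (S.filter (· ≤ v)).card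

lemma rankIn_lt {S : Finset ℕ} {v w : ℕ} (hw : w ∈ S) (hvw : v < w) :
    rankIn S v < rankIn S w := by
  apply Finset.card_lt_card
  constructor
  · intro x hx
    obtain ⟨h1, h2⟩ := Finset.mem_filter.mp hx
    exact Finset.mem_filter.mpr ⟨h1, by omega⟩
  · intro hsub
    have := hsub (Finset.mem_filter.mpr ⟨hw, le_refl w⟩)
    have := (Finset.mem_filter.mp this).2
    omega

lemma rankIn_injOn {S : Finset ℕ} {v w : ℕ} (hv : v ∈ S) (hw : w ∈ S)
    (h : rankIn S v = rankIn S w) : v = w := by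
  rcases Nat.lt_trichotomy v w with hlt | heq | hgt
  · have := rankIn_lt hw hlt; omega
  · exact heq
  · have := rankIn_lt hv hgt; omega

lemma rankIn_pos {S : Finset ℕ} {v : ℕ} (hv : v ∈ S) : 1 ≤ rankIn S v := by
  rw [rankIn, Nat.one_le_iff_ne_zero, Ne, Finset.card_eq_zero, ← Ne,
    ← Finset.nonempty_iff_ne_empty]
  exact ⟨v, Finset.mem_filter.mpr ⟨hv, le_refl v⟩⟩

lemma rankIn_le {S : Finset ℕ} {v : ℕ} : rankIn S v ≤ S.card :=
  Finset.card_le_card (Finset.filter_subset _ _)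

lemma rankIn_surj (S : Finset ℕ) {m : ℕ} (h1 : 1 ≤ m) (h2 : m ≤ S.card) :
    ∃ v ∈ S, rankIn S v = m := by
  have hcard : (Finset.Icc 1 S.card).card ≤ S.card := by
    rw [Nat.card_Icc]
    omega
  have := Finset.surj_on_of_inj_on_of_card_le (s := S) (t := Finset.Icc 1 S.card)
    (fun v _ => rankIn S v)
    (fun v hv => Finset.mem_Icc.mpr ⟨rankIn_pos hv, rankIn_le⟩)
    (fun v w hv hw h => rankIn_injOn hv hw h)
    hcard
  obtain ⟨v, hv, hvm⟩ := this m (Finset.mem_Icc.mpr ⟨h1, h2⟩)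
  exact ⟨v, hv, hvm.symm⟩

/-- the shifted shape (all rows but the first) is a partition of n - l 0 -/
lemma shift_isPartition {l : ℕ → ℕ} {n : ℕ} (hl : IsPartition l n) :
    IsPartition (fun i => l (i+1)) (n - l 0) := by
  have hzero : ∀ i, n - l 0 ≤ i → l (i+1) = 0 := by
    intro i hi
    by_contra hc
    have hpos : 1 ≤ l (i+1) := by omega
    have hlt : i + 1 < n := pos_row_lt hl hpos
    -- sum over range (i+2) is at least l 0 + (i+1)
    have hsub : Finset.range (i+2) ⊆ Finset.range n := by
      apply Finset.range_subset_range.mpr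
      omega
    have hle : ∑ t ∈ Finset.range (i+2), l t ≤ n := by
      calc ∑ t ∈ Finset.range (i+2), l t ≤ ∑ t ∈ Finset.range n, l t :=
          Finset.sum_le_sum_of_subset hsub
      _ = n := hl.2.1
    have hsplit : ∑ t ∈ Finset.range (i+2), l t
        = (∑ t ∈ Finset.range (i+1), l (t+1)) + l 0 := Finset.sum_range_succ' l (i+1)
    have hbound : (i+1) * 1 ≤ ∑ t ∈ Finset.range (i+1), l (t+1) := by
      calc (i+1) * 1 = ∑ _t ∈ Finset.range (i+1), 1 := by
            rw [Finset.sum_const, Finset.card_range, smul_eq_mul]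
      _ ≤ _ := by
            apply Finset.sum_le_sum
            intro t ht
            have : l (i+1) ≤ l (t+1) := hl.1 (by
              have := Finset.mem_range.mp ht
              omega)
            omega
    have hl0 : l 0 ≤ n := le_of_mem hl
    omega
  refine ⟨fun a b hab => hl.1 (by omega), ?_, hzero⟩
  rcases Nat.eq_zero_or_pos n with h | h
  · have := partition_zero (h ▸ hl)
    subst h
    simp [this]
  · have hsplit : ∑ t ∈ Finset.range n, l t
        = (∑ t ∈ Finset.range (n-1), l (t+1)) + l 0 := by
      have := Finset.sum_range_succ' l (n-1)
      rwa [show n - 1 + 1 = n by omega] at this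
    have hl0 : 1 ≤ l 0 := by
      by_contra hc
      have hz : l 0 = 0 := by omega
      have : ∀ t ∈ Finset.range n, l t = 0 := by
        intro t _
        have := hl.1 (Nat.zero_le t)
        omega
      have := Finset.sum_eq_zero this
      rw [hl.2.1] at this
      omega
    have hsum : ∑ t ∈ Finset.range (n-1), l (t+1) = n - l 0 := by
      rw [hl.2.1] at hsplit
      omega
    have hss : ∑ i ∈ Finset.range (n - l 0), l (i+1)
        = ∑ t ∈ Finset.range (n-1), l (t+1) := by
      apply Finset.sum_subset
      · apply Finset.range_subset_range.mpr
        omega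
      · intro t _ ht
        exact hzero t (by simpa using ht)
    rw [hss, hsum]

end SytAux
namespace SytAux

section Reduction

variable {l : ℕ → ℕ} {n : ℕ} {T : ℕ × ℕ → ℕ}

/-- the set of entries below the first row -/
noncomputable def lowVals (l : ℕ → ℕ) (n : ℕ) (T : ℕ × ℕ → ℕ) : Finset ℕ :=
  (lowCells l n).image T

/-- the renumbered lower tableau -/
noncomputable def lowTab (l : ℕ → ℕ) (n : ℕ) (T : ℕ × ℕ → ℕ) : ℕ × ℕ → ℕ :=
  fun c => if c.2 < l (c.1+1) then rankIn (lowVals l n T) (T (c.1+1, c.2)) else 0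

lemma card_lowVals (hl : IsPartition l n) (hT : IsSYT l n T) :
    (lowVals l n T).card = n - l 0 := by
  rw [lowVals, Finset.card_image_of_injOn, card_lowCells hl]
  intro c hc d hd h
  exact syt_val_inj hT (lowCells_subset_cells hc) (lowCells_subset_cells hd) h

lemma upCell_mem (hl : IsPartition l n) {c : ℕ × ℕ} (hc : c.2 < l (c.1+1)) :
    ((c.1+1, c.2) : ℕ × ℕ) ∈ lowCells l n := by
  apply mem_lowCells.mpr
  refine ⟨by omega, ?_, hc⟩
  exact pos_row_lt hl (Nat.lt_of_le_of_lt (Nat.zero_le _) hc)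

lemma lowVals_mem (hl : IsPartition l n) {c : ℕ × ℕ} (hc : c.2 < l (c.1+1)) :
    T (c.1+1, c.2) ∈ lowVals l n T :=
  Finset.mem_image_of_mem T (upCell_mem hl hc)

lemma lowVals_subset (hl : IsPartition l n) (hT : IsSYT l n T) :
    lowVals l n T ⊆ Finset.Icc 1 n := by
  intro v hv
  obtain ⟨c, hc, rfl⟩ := Finset.mem_image.mp hv
  have := hT.2.1 c (lowCells_subset_cells hc)
  exact Finset.mem_Icc.mpr this

lemma lowVals_powersetCard (hl : IsPartition l n) (hT : IsSYT l n T) :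
    lowVals l n T ∈ Finset.powersetCard (n - l 0) (Finset.Icc 1 n) :=
  Finset.mem_powersetCard.mpr ⟨lowVals_subset hl hT, card_lowVals hl hT⟩

lemma lowTab_syt (hl : IsPartition l n) (hT : IsSYT l n T) :
    IsSYT (fun i => l (i+1)) (n - l 0) (lowTab l n T) := by
  have hcard : (lowVals l n T).card = n - l 0 := card_lowVals hl hT
  have hmemcell : ∀ c : ℕ × ℕ, c ∈ cellsOf (fun i => l (i+1)) ↔ c.2 < l (c.1+1) :=
    fun c => Iff.rfl
  refine ⟨?_, ?_, ?_, ?_⟩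
  · intro c hc
    rw [hmemcell] at hc
    rw [lowTab, if_neg hc]
  · intro c hc
    rw [hmemcell] at hc
    rw [lowTab]
    simp only [if_pos hc]
    have hmem := lowVals_mem hl hc (T := T)
    exact ⟨rankIn_pos hmem, le_trans rankIn_le (le_of_eq hcard)⟩
  · intro m h1 h2
    obtain ⟨v, hv, hvm⟩ := rankIn_surj (lowVals l n T) h1 (by omega)
    obtain ⟨c0, hc0, hc0v⟩ := Finset.mem_image.mp hv
    obtain ⟨hc01, hc02, hc03⟩ := mem_lowCells.mp hc0
    refine ⟨(c0.1 - 1, c0.2), ⟨?_, ?_⟩, ?_⟩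
    · rw [hmemcell]
      show c0.2 < l (c0.1 - 1 + 1)
      rw [show c0.1 - 1 + 1 = c0.1 by omega]
      exact hc03
    · show lowTab l n T (c0.1 - 1, c0.2) = m
      rw [lowTab]
      simp only
      rw [if_pos (show c0.2 < l (c0.1 - 1 + 1) by
        rw [show c0.1 - 1 + 1 = c0.1 by omega]; exact hc03)]
      rw [show ((c0.1 - 1 + 1, c0.2) : ℕ × ℕ) = c0 from
        Prod.ext (show c0.1 - 1 + 1 = c0.1 by omega) rfl]
      rw [hc0v, hvm]
    · rintro ⟨d1, d2⟩ ⟨hd, hdm⟩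
      rw [hmemcell] at hd
      rw [lowTab] at hdm
      simp only at hd hdm
      rw [if_pos hd] at hdm
      have hvd : T (d1+1, d2) ∈ lowVals l n T := lowVals_mem (c := (d1, d2)) hl hd
      have heq : T (d1+1, d2) = v := by
        apply rankIn_injOn hvd (hc0v ▸ Finset.mem_image_of_mem T hc0)
        rw [hvm]
        exact hdm
      have hceq : ((d1+1, d2) : ℕ × ℕ) = c0 := by
        apply syt_val_inj hT _ (lowCells_subset_cells hc0) (heq.trans hc0v.symm)
        exact lowCells_subset_cells (upCell_mem (c := (d1, d2)) hl hd)
      rw [show c0 = (c0.1, c0.2) from Prod.mk.eta.symm, Prod.mk.injEq] at hceq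
      exact Prod.ext (show d1 = c0.1 - 1 by omega) (show d2 = c0.2 by omega)
  · rintro ⟨c1, c2⟩ ⟨d1, d2⟩ hc hd h1 h2 hne
    rw [hmemcell] at hc hd
    simp only at hc hd h1 h2
    rw [lowTab, lowTab]
    simp only [if_pos hc, if_pos hd]
    apply rankIn_lt (lowVals_mem (c := (d1, d2)) hl hd)
    apply hT.2.2.2 (c1+1, c2) (d1+1, d2)
      (show ((c1+1, c2) : ℕ × ℕ) ∈ cellsOf l from hc)
      (show ((d1+1, d2) : ℕ × ℕ) ∈ cellsOf l from hd)
      (show c1 + 1 ≤ d1 + 1 by omega) (show c2 ≤ d2 from h2)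
    intro hbe
    rw [Prod.mk.injEq] at hbe
    apply hne
    rw [Prod.mk.injEq]
    omega

lemma phi_inj (hl : IsPartition l n) {T₁ T₂ : ℕ × ℕ → ℕ}
    (hT₁ : IsSYT l n T₁) (hT₂ : IsSYT l n T₂)
    (hS : lowVals l n T₁ = lowVals l n T₂) (hTT : lowTab l n T₁ = lowTab l n T₂) :
    T₁ = T₂ := by
  funext c
  by_cases hc : c ∈ cellsOf l
  · by_cases h0 : c.1 = 0
    · -- first row : both are the increasing enumeration of the complement
      have hsub : lowVals l n T₁ ⊆ Finset.Icc 1 n := lowVals_subset hl hT₁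
      have hl0n : l 0 ≤ n := le_of_mem hl
      have hCcard : ((Finset.Icc 1 n) \ lowVals l n T₁).card = l 0 := by
        rw [Finset.card_sdiff_of_subset hsub, Nat.card_Icc, card_lowVals hl hT₁]
        omega
      have key : ∀ (T : ℕ × ℕ → ℕ), IsSYT l n T → lowVals l n T = lowVals l n T₁ →
          (fun b : Fin (l 0) => T (0, b.1))
            = ((Finset.Icc 1 n) \ lowVals l n T₁).orderEmbOfFin hCcard := by
        intro T hT hTS
        apply Finset.orderEmbOfFin_unique
        · intro b
          have hbc : ((0, b.1) : ℕ × ℕ) ∈ cellsOf l := b.2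
          rw [Finset.mem_sdiff]
          constructor
          · exact Finset.mem_Icc.mpr (hT.2.1 _ hbc)
          · intro hmem
            rw [← hTS] at hmem
            obtain ⟨c0, hc0, hc0v⟩ := Finset.mem_image.mp hmem
            have hco := syt_val_inj hT (lowCells_subset_cells hc0) hbc hc0v
            have h1 := (mem_lowCells.mp hc0).1
            rw [hco] at h1
            simp at h1
        · intro b b' hbb
          have hbb' : b.1 < b'.1 := hbb
          apply hT.2.2.2 (0, b.1) (0, b'.1) b.2 b'.2 (le_refl 0) (le_of_lt hbb')
          intro hbe
          rw [Prod.mk.injEq] at hbe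
          omega
      have k1 := key T₁ hT₁ rfl
      have k2 := key T₂ hT₂ hS.symm
      have hcell : c.2 < l 0 := by
        have hx : c.2 < l c.1 := hc
        rwa [h0] at hx
      have hval := congrFun (k1.trans k2.symm) ⟨c.2, hcell⟩
      simp only at hval
      rw [show c = ((0 : ℕ), c.2) from Prod.ext h0 rfl]
      exact hval
    · -- lower rows : determined by lowVals and lowTab
      have hc1 : 1 ≤ c.1 := by omega
      have hcell : c.2 < l (c.1 - 1 + 1) := by
        rw [show c.1 - 1 + 1 = c.1 by omega]
        exact hc
      have hval := congrFun hTT (c.1 - 1, c.2)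
      rw [lowTab, lowTab] at hval
      simp only [if_pos hcell] at hval
      rw [show ((c.1 - 1 + 1, c.2) : ℕ × ℕ) = c from
        Prod.ext (show c.1 - 1 + 1 = c.1 by omega) rfl] at hval
      have hm1 : T₁ c ∈ lowVals l n T₁ :=
        Finset.mem_image_of_mem T₁ (mem_lowCells.mpr ⟨hc1, (cell_lt hl hc).1, hc⟩)
      have hm2 : T₂ c ∈ lowVals l n T₁ := by
        rw [hS]
        exact Finset.mem_image_of_mem T₂ (mem_lowCells.mpr ⟨hc1, (cell_lt hl hc).1, hc⟩)
      apply rankIn_injOn hm1 hm2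
      rw [hval, hS]
  · rw [hT₁.1 c hc, hT₂.1 c hc]

end Reduction

end SytAux
namespace SytAux

theorem row_reduction {l : ℕ → ℕ} {n : ℕ} (hl : IsPartition l n) :
    sytNum l n ≤ n.choose (n - l 0) * sytNum (fun i => l (i+1)) (n - l 0) := by
  classical
  have hμ : IsPartition (fun i => l (i+1)) (n - l 0) := shift_isPartition hl
  haveI hfin : Finite {T' : ℕ × ℕ → ℕ // IsSYT (fun i => l (i+1)) (n - l 0) T'} :=
    finite_syt hμ
  have hinj : Function.Injective
      (fun t : {T : ℕ × ℕ → ℕ // IsSYT l n T} =>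
        ((⟨lowVals l n t.1, lowVals_powersetCard hl t.2⟩ :
            {S // S ∈ Finset.powersetCard (n - l 0) (Finset.Icc 1 n)}),
         (⟨lowTab l n t.1, lowTab_syt hl t.2⟩ :
            {T' : ℕ × ℕ → ℕ // IsSYT (fun i => l (i+1)) (n - l 0) T'}))) := by
    intro a b hab
    have hS : lowVals l n a.1 = lowVals l n b.1 :=
      congrArg (fun p => (p.1.1 : Finset ℕ)) hab
    have hT : lowTab l n a.1 = lowTab l n b.1 :=
      congrArg (fun p => (p.2.1 : (ℕ × ℕ) → ℕ)) hab
    exact Subtype.ext (phi_inj hl a.2 b.2 hS hT)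
  calc sytNum l n
      ≤ Nat.card ({S // S ∈ Finset.powersetCard (n - l 0) (Finset.Icc 1 n)} ×
          {T' : ℕ × ℕ → ℕ // IsSYT (fun i => l (i+1)) (n - l 0) T'}) :=
        Nat.card_le_card_of_injective _ hinj
    _ = Nat.card {S // S ∈ Finset.powersetCard (n - l 0) (Finset.Icc 1 n)} *
          Nat.card {T' : ℕ × ℕ → ℕ // IsSYT (fun i => l (i+1)) (n - l 0) T'} :=
        Nat.card_prod _ _
    _ = n.choose (n - l 0) * sytNum (fun i => l (i+1)) (n - l 0) := by
        congr 1
        rw [Nat.card_eq_fintype_card, Fintype.card_coe, Finset.card_powersetCard,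
          Nat.card_Icc, show n + 1 - 1 = n by omega]

theorem syt_sq_le {μ : ℕ → ℕ} {j : ℕ} (hμ : IsPartition μ j) :
    (sytNum μ j)^2 ≤ j.factorial := by
  rw [← sum_squares j]
  exact Finset.single_le_sum
    (f := fun lam : {l : ℕ → ℕ // IsPartition l j} => (sytNum lam.1 j)^2)
    (fun _ _ => Nat.zero_le _) (Finset.mem_univ ⟨μ, hμ⟩)

end SytAux

theorem stmt6 (n : ℕ) (l : ℕ → ℕ) (hl : IsPartition l n) :
    (sytNum l n : ℝ) ≤ (n.choose (n - l 0) : ℝ) * Real.sqrt ((n - l 0).factorial) := by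
  have hred := SytAux.row_reduction hl
  have hsq := SytAux.syt_sq_le (SytAux.shift_isPartition hl)
  have h2 : ((sytNum (fun i => l (i+1)) (n - l 0) : ℕ) : ℝ)
      ≤ Real.sqrt ((n - l 0).factorial) := by
    rw [show ((sytNum (fun i => l (i+1)) (n - l 0) : ℕ) : ℝ)
        = Real.sqrt (((sytNum (fun i => l (i+1)) (n - l 0) : ℕ) : ℝ)^2) from
      (Real.sqrt_sq (by positivity)).symm]
    apply Real.sqrt_le_sqrt
    exact_mod_cast hsq
  calc (sytNum l n : ℝ)
      ≤ (n.choose (n - l 0) : ℝ) * (sytNum (fun i => l (i+1)) (n - l 0) : ℕ) := by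
        exact_mod_cast hred
    _ ≤ (n.choose (n - l 0) : ℝ) * Real.sqrt ((n - l 0).factorial) := by
        apply mul_le_mul_of_nonneg_left h2 (by positivity)
end

section
/- Let λ be a partition of n with j = n − λ_1 held fixed, and let s_λ = 1/n + ((n−1)/n) r_λ where r_λ = (1/C(n,2)) Σ_i [C(λ_i,2) − C(λ'_i,2)]. Then s_λ = 1 − 2j/n + O(1/n²) as n → ∞; quantitatively, |s_λ − (1 − 2j/n)| ≤ C_j/n² for a constant C_j depending only on j. -/
/-- The random transpositions character ratio `r_λ`. -/
noncomputable def rOf (l : ℕ → ℕ) (n : ℕ) : ℝ :=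
  (1 / (n.choose 2 : ℝ)) *
    ∑ i ∈ Finset.range n, (((l i).choose 2 : ℝ) - ((conj l i).choose 2 : ℝ))

lemma natcard_lt_subset {p : ℕ → Prop} {k : ℕ} (h : ∀ i, p i → i < k) :
    Nat.card {i : ℕ // p i} ≤ k := by
  have h2 : Nat.card {i : ℕ | p i} ≤ Nat.card (Set.Iio k : Set ℕ) :=
    Nat.card_mono (Set.finite_Iio k) (fun i hi => h i hi)
  exact h2.trans_eq (by simp)

theorem stmt14 (j : ℕ) :
    ∃ C : ℝ, ∀ n : ℕ, 2 ≤ n → ∀ l : ℕ → ℕ, IsPartition l n → n - l 0 = j →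
      |(1 / (n : ℝ) + ((n : ℝ) - 1) / n * rOf l n) - (1 - 2 * (j : ℝ) / n)| ≤
        C / (n : ℝ) ^ 2 := by
  refine ⟨(j:ℝ)^2 + j + 2*((j:ℝ)*(j.choose 2) + (j:ℝ)*((j+1).choose 2)), ?_⟩
  intro n hn l hpart hj
  obtain ⟨hanti, hsum, hzero⟩ := hpart
  have h0n : 0 < n := by omega
  have hl0n : l 0 ≤ n := by
    calc l 0 ≤ ∑ i ∈ Finset.range n, l i :=
          Finset.single_le_sum (fun i _ => Nat.zero_le _) (Finset.mem_range.2 h0n)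
    _ = n := hsum
  have hjn : j ≤ n := by omega
  have hl0 : l 0 = n - j := by omega
  have hsplit : l 0 + ∑ i ∈ Finset.Ico 1 n, l i = n := by
    have h := Finset.sum_eq_sum_Ico_succ_bot h0n l
    rw [← Finset.range_eq_Ico] at h
    simpa [hsum] using h.symm
  have htail : ∑ i ∈ Finset.Ico 1 n, l i = j := by omega
  -- l i ≤ j for i ≥ 1
  have hle : ∀ i, 1 ≤ i → l i ≤ j := by
    intro i hi
    rcases lt_or_ge i n with h | h
    · calc l i ≤ ∑ k ∈ Finset.Ico 1 n, l k :=
            Finset.single_le_sum (fun k _ => Nat.zero_le _) (Finset.mem_Ico.2 ⟨hi, h⟩)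
      _ = j := htail
    · simp [hzero i h]
  -- l i = 0 for i ≥ j+1
  have hzero' : ∀ i, j + 1 ≤ i → l i = 0 := by
    intro i hi
    rcases le_or_gt n i with h | h
    · exact hzero i h
    by_contra hne
    have h1 : 1 ≤ l i := Nat.one_le_iff_ne_zero.2 hne
    have hge : j + 1 ≤ ∑ k ∈ Finset.Ico 1 n, l k := by
      calc j + 1 = ∑ _k ∈ Finset.Ico 1 (j+2), 1 := by simp
      _ ≤ ∑ k ∈ Finset.Ico 1 (j+2), l k := by
          refine Finset.sum_le_sum fun k hk => ?_
          have hk' := Finset.mem_Ico.1 hk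
          exact le_trans h1 (hanti (by omega))
      _ ≤ ∑ k ∈ Finset.Ico 1 n, l k := by
          refine Finset.sum_le_sum_of_subset (Finset.Ico_subset_Ico le_rfl (by omega))
    omega
  -- conj bounds
  have hconj1 : ∀ b, conj l b ≤ j + 1 := fun b =>
    natcard_lt_subset (fun i hi => by
      by_contra h; push_neg at h
      have := hzero' i (by omega); omega)
  have hconj2 : ∀ b, j ≤ b → conj l b ≤ 1 := fun b hb =>
    natcard_lt_subset (fun i hi => by
      by_contra h; push_neg at h
      have := hle i (by omega); omega)
  set A := ∑ i ∈ Finset.Ico 1 n, (l i).choose 2 with hAdef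
  set B := ∑ b ∈ Finset.range n, (conj l b).choose 2 with hBdef
  have hA : A ≤ j * j.choose 2 := by
    have heq : A = ∑ i ∈ Finset.Ico 1 n ∩ Finset.Ico 1 (j+1), (l i).choose 2 := by
      refine (Finset.sum_subset Finset.inter_subset_left ?_).symm
      intro x hx hx'
      have h1 := Finset.mem_Ico.1 hx
      have h2 : x ∉ Finset.Ico 1 (j+1) := fun hm => hx' (Finset.mem_inter.2 ⟨hx, hm⟩)
      rw [Finset.mem_Ico] at h2
      rw [hzero' x (by omega)]
      simp
    rw [heq]
    calc ∑ i ∈ Finset.Ico 1 n ∩ Finset.Ico 1 (j+1), (l i).choose 2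
        ≤ (Finset.Ico 1 n ∩ Finset.Ico 1 (j+1)).card • j.choose 2 := by
          refine Finset.sum_le_card_nsmul _ _ _ fun x hx => ?_
          have h1 := Finset.mem_Ico.1 (Finset.mem_inter.1 hx).1
          exact Nat.choose_mono 2 (hle x h1.1)
    _ ≤ j * j.choose 2 := by
        rw [smul_eq_mul]
        refine Nat.mul_le_mul_right _ ?_
        calc (Finset.Ico 1 n ∩ Finset.Ico 1 (j+1)).card
            ≤ (Finset.Ico 1 (j+1)).card := Finset.card_le_card Finset.inter_subset_right
        _ = j := by simp
  have hB : B ≤ j * (j+1).choose 2 := by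
    have heq : B = ∑ b ∈ Finset.range n ∩ Finset.range j, (conj l b).choose 2 := by
      refine (Finset.sum_subset Finset.inter_subset_left ?_).symm
      intro x hx hx'
      have h2 : x ∉ Finset.range j := fun hm => hx' (Finset.mem_inter.2 ⟨hx, hm⟩)
      rw [Finset.mem_range] at h2
      have := hconj2 x (by omega)
      exact Nat.choose_eq_zero_of_lt (by omega)
    rw [heq]
    calc ∑ b ∈ Finset.range n ∩ Finset.range j, (conj l b).choose 2
        ≤ (Finset.range n ∩ Finset.range j).card • (j+1).choose 2 :=
          Finset.sum_le_card_nsmul _ _ _ fun x _ => Nat.choose_mono 2 (hconj1 x)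
    _ ≤ j * (j+1).choose 2 := by
        rw [smul_eq_mul]
        refine Nat.mul_le_mul_right _ ?_
        calc (Finset.range n ∩ Finset.range j).card
            ≤ (Finset.range j).card := Finset.card_le_card Finset.inter_subset_right
        _ = j := by simp
  -- decompose the sum
  have hsplit2 : ∑ i ∈ Finset.range n, (l i).choose 2 = (n-j).choose 2 + A := by
    have h := Finset.sum_eq_sum_Ico_succ_bot h0n (fun i => (l i).choose 2)
    rw [← Finset.range_eq_Ico] at h
    rw [h, hl0, hAdef]
  have hr : rOf l n = (1/(n.choose 2:ℝ)) * (((n-j).choose 2 : ℝ) + ((A:ℝ) - (B:ℝ))) := by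
    unfold rOf
    congr 1
    rw [Finset.sum_sub_distrib, ← Nat.cast_sum, ← Nat.cast_sum, hsplit2, ← hBdef]
    push_cast
    ring
  -- real algebra
  have hN : (2:ℝ) ≤ (n:ℝ) := by exact_mod_cast hn
  have hN0 : (n:ℝ) ≠ 0 := by linarith
  have hN1 : (n:ℝ) - 1 ≠ 0 := by linarith
  have hch : (n.choose 2 : ℝ) = (n:ℝ) * ((n:ℝ)-1)/2 := Nat.cast_choose_two ℝ n
  have hM : ((n-j).choose 2 : ℝ) = ((n:ℝ)-(j:ℝ)) * (((n:ℝ)-(j:ℝ))-1)/2 := by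
    rw [Nat.cast_choose_two, Nat.cast_sub hjn]
  have key : (1 / (n : ℝ) + ((n : ℝ) - 1) / n * rOf l n) - (1 - 2 * (j : ℝ) / n)
      = ((j:ℝ)^2 + (j:ℝ) + 2*((A:ℝ) - (B:ℝ))) / (n:ℝ)^2 := by
    rw [hr, hch, hM]
    field_simp
    ring
  rw [key, abs_div, abs_of_nonneg (by positivity : (0:ℝ) ≤ (n:ℝ)^2)]
  have hApos : (0:ℝ) ≤ (A:ℝ) := Nat.cast_nonneg _
  have hBpos : (0:ℝ) ≤ (B:ℝ) := Nat.cast_nonneg _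
  have hAe : (A:ℝ) ≤ (j:ℝ) * (j.choose 2 : ℝ) := by exact_mod_cast hA
  have hBe : (B:ℝ) ≤ (j:ℝ) * ((j+1).choose 2 : ℝ) := by exact_mod_cast hB
  have habs : |(j:ℝ)^2 + (j:ℝ) + 2*((A:ℝ) - (B:ℝ))|
      ≤ (j:ℝ)^2 + (j:ℝ) + 2*((j:ℝ)*(j.choose 2) + (j:ℝ)*((j+1).choose 2)) := by
    rw [abs_le]
    constructor
    · linarith [sq_nonneg (j:ℝ), (Nat.cast_nonneg j : (0:ℝ) ≤ (j:ℝ))]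
    · linarith [sq_nonneg (j:ℝ), (Nat.cast_nonneg j : (0:ℝ) ≤ (j:ℝ))]
  exact div_le_div_of_nonneg_right habs (by positivity) |>.trans_eq rfl
end
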